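/- If μ is an F-invariant Borel probability measure on X and c is measurable, then R_low ∘ F = R_low and R_up ∘ F = R_up μ-almost everywhere; if moreover the system (X, F, μ) is ergodic, then there exist constants r_0, r_1 ∈ [0,∞] such that R_low(x) = r_0 and R_up(x) = r_1 for μ-almost every x ∈ X. -/

import Mathlib

open Filter
open scoped ENNReal

noncomputable section

/-- The `n`-cylinder `C_{x,n}` of `x` for the coding `c` of the system `(X, F)`
(`C_{x,0} = X` by convention). -/
def cylG {X A : Type*} (F : X → X) (c : X → A) (x : X) (n : ℕ) : Set X :=
  {y | ∀ k < n, c (F^[k] y) = c (F^[k] x)}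

/-- The Poincaré return time `τ(M) = inf {k ≥ 1 | F^k(M) ∩ M ≠ ∅} ∈ ℕ ∪ {∞}`. -/
def tauG {X : Type*} (F : X → X) (M : Set X) : ℕ∞ :=
  sInf {e : ℕ∞ | ∃ k : ℕ, e = (k : ℕ∞) ∧ 1 ≤ k ∧ (F^[k] '' M ∩ M).Nonempty}

/-- The lower local return rate `R_low(x) = liminf_n τ(C_{x,n})/n`, valued in `[0,∞]`. -/
def RlowG {X A : Type*} (F : X → X) (c : X → A) (x : X) : ℝ≥0∞ :=
  liminf (fun n : ℕ => (tauG F (cylG F c x n) : ℝ≥0∞) / (n : ℝ≥0∞)) atTop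

/-- The upper local return rate `R_up(x) = limsup_n τ(C_{x,n})/n`, valued in `[0,∞]`. -/
def RupG {X A : Type*} (F : X → X) (c : X → A) (x : X) : ℝ≥0∞ :=
  limsup (fun n : ℕ => (tauG F (cylG F c x n) : ℝ≥0∞) / (n : ℝ≥0∞)) atTop

open MeasureTheory

section Aux

open Function

variable {X A : Type*}

lemma cyl_step (F : X → X) (c : X → A) (x : X) (n : ℕ) {y : X}
    (hy : y ∈ cylG F c x (n + 1)) : F y ∈ cylG F c (F x) n := by
  intro k hk
  have h := hy (k + 1) (by omega)
  rw [Function.iterate_succ_apply, Function.iterate_succ_apply] at h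
  exact h

lemma tau_step (F : X → X) (c : X → A) (x : X) (n : ℕ) :
    tauG F (cylG F c (F x) n) ≤ tauG F (cylG F c x (n + 1)) := by
  apply sInf_le_sInf
  rintro e ⟨k, rfl, hk, z, ⟨y, hy, rfl⟩, hz⟩
  refine ⟨k, rfl, hk, ⟨F^[k] (F y), ⟨F y, cyl_step F c x n hy, rfl⟩, ?_⟩⟩
  rw [← Function.iterate_succ_apply, Function.iterate_succ_apply']
  exact cyl_step F c x n hz

lemma liminf_cmul {b : ℝ≥0∞} (hb : b ≠ ⊤) (w : ℕ → ℝ≥0∞) :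
    liminf (fun n => b * w n) atTop = b * liminf w atTop := by
  rcases eq_or_ne b 0 with rfl | hb0
  · simp
  let g := fun x : ℝ≥0∞ => b * x
  have hg_bij : Function.Bijective g :=
    Function.bijective_iff_has_inverse.mpr
      ⟨fun x => b⁻¹ * x,
        ⟨fun x => by simp [g, ← mul_assoc, ENNReal.inv_mul_cancel hb0 hb], fun x => by
          simp [g, ← mul_assoc, ENNReal.mul_inv_cancel hb0 hb]⟩⟩
  have hg_mono : StrictMono g :=
    Monotone.strictMono_of_injective (fun _ _ h => by
      exact (ENNReal.mul_le_mul_iff_right hb0 hb).2 h) hg_bij.1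
  let g_iso := StrictMono.orderIsoOfSurjective g hg_mono hg_bij.2
  exact (OrderIso.liminf_apply g_iso).symm

lemma mul_ratio_key {b : ℝ≥0∞} (hb : b < 1) (v : ℕ → ℝ≥0∞) :
    ∀ᶠ n : ℕ in atTop, b * (v (n + 1) / (n : ℝ≥0∞)) ≤ v (n + 1) / ((n + 1 : ℕ) : ℝ≥0∞) := by
  have hδ : (0 : ℝ≥0∞) < 1 - b := tsub_pos_of_lt hb
  have hδt : (1 : ℝ≥0∞) - b ≠ ⊤ := ((tsub_le_self).trans_lt (by norm_num)).ne
  obtain ⟨N, hN⟩ := ENNReal.exists_nat_gt (ENNReal.inv_ne_top.mpr hδ.ne')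
  filter_upwards [eventually_ge_atTop (max N 1)] with n hn
  have hn1 : 1 ≤ n := le_trans (le_max_right N 1) hn
  have hnN : N ≤ n := le_trans (le_max_left N 1) hn
  have hne : (n : ℝ≥0∞) ≠ 0 := Nat.cast_ne_zero.mpr (by omega)
  have hntop : (n : ℝ≥0∞) ≠ ⊤ := ENNReal.natCast_ne_top n
  have h1 : (1 : ℝ≥0∞) ≤ (1 - b) * n := by
    calc (1 : ℝ≥0∞) = (1 - b) * (1 - b)⁻¹ := (ENNReal.mul_inv_cancel hδ.ne' hδt).symm
      _ ≤ (1 - b) * (N : ℝ≥0∞) := mul_le_mul_right hN.le _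
      _ ≤ (1 - b) * (n : ℝ≥0∞) := mul_le_mul_right (by exact_mod_cast hnN) _
  have h2 : b * ((n : ℝ≥0∞) + 1) ≤ (n : ℝ≥0∞) := by
    have hb1 : b + (1 - b) = 1 := add_tsub_cancel_of_le hb.le
    calc b * ((n : ℝ≥0∞) + 1) = b * n + b := by ring
      _ ≤ b * n + (1 - b) * n := add_le_add_right (hb.le.trans h1) _
      _ = (b + (1 - b)) * n := by ring
      _ = (n : ℝ≥0∞) := by rw [hb1, one_mul]
  have h3 : b * ((n : ℝ≥0∞))⁻¹ ≤ ((n : ℝ≥0∞) + 1)⁻¹ := by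
    rw [ENNReal.le_inv_iff_mul_le]
    calc b * ((n : ℝ≥0∞))⁻¹ * ((n : ℝ≥0∞) + 1) = b * ((n : ℝ≥0∞) + 1) * ((n : ℝ≥0∞))⁻¹ := by
          ring
      _ ≤ (n : ℝ≥0∞) * ((n : ℝ≥0∞))⁻¹ := mul_le_mul_left h2 _
      _ = 1 := ENNReal.mul_inv_cancel hne hntop
  calc b * (v (n + 1) / (n : ℝ≥0∞)) = v (n + 1) * (b * ((n : ℝ≥0∞))⁻¹) := by
        rw [div_eq_mul_inv]; ring
    _ ≤ v (n + 1) * ((n : ℝ≥0∞) + 1)⁻¹ := mul_le_mul_right h3 _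
    _ = v (n + 1) / ((n + 1 : ℕ) : ℝ≥0∞) := by rw [div_eq_mul_inv]; push_cast; ring

lemma shift_liminf_le (v : ℕ → ℝ≥0∞) :
    liminf (fun n : ℕ => v (n + 1) / (n : ℝ≥0∞)) atTop ≤
      liminf (fun n : ℕ => v n / (n : ℝ≥0∞)) atTop := by
  refine ENNReal.le_of_forall_lt_one_mul_le fun b hb => ?_
  have hbt : b ≠ ⊤ := (hb.trans_le le_top).ne
  calc b * liminf (fun n : ℕ => v (n + 1) / (n : ℝ≥0∞)) atTop
      = liminf (fun n : ℕ => b * (v (n + 1) / (n : ℝ≥0∞))) atTop := (liminf_cmul hbt _).symm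
    _ ≤ liminf (fun n : ℕ => v (n + 1) / ((n + 1 : ℕ) : ℝ≥0∞)) atTop :=
        liminf_le_liminf (mul_ratio_key hb v)
    _ = liminf (fun n : ℕ => v n / (n : ℝ≥0∞)) atTop :=
        liminf_nat_add (fun n : ℕ => v n / (n : ℝ≥0∞)) 1

lemma shift_limsup_le (v : ℕ → ℝ≥0∞) :
    limsup (fun n : ℕ => v (n + 1) / (n : ℝ≥0∞)) atTop ≤
      limsup (fun n : ℕ => v n / (n : ℝ≥0∞)) atTop := by
  refine ENNReal.le_of_forall_lt_one_mul_le fun b hb => ?_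
  have hbt : b ≠ ⊤ := (hb.trans_le le_top).ne
  calc b * limsup (fun n : ℕ => v (n + 1) / (n : ℝ≥0∞)) atTop
      = limsup (fun n : ℕ => b * (v (n + 1) / (n : ℝ≥0∞))) atTop :=
        (ENNReal.limsup_const_mul_of_ne_top hbt).symm
    _ ≤ limsup (fun n : ℕ => v (n + 1) / ((n + 1 : ℕ) : ℝ≥0∞)) atTop :=
        limsup_le_limsup (mul_ratio_key hb v)
    _ = limsup (fun n : ℕ => v n / (n : ℝ≥0∞)) atTop :=
        limsup_nat_add (fun n : ℕ => v n / (n : ℝ≥0∞)) 1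

lemma Rlow_comp_le (F : X → X) (c : X → A) (x : X) : RlowG F c (F x) ≤ RlowG F c x := by
  refine le_trans (liminf_le_liminf (Eventually.of_forall fun n => ?_))
    (shift_liminf_le fun n => (tauG F (cylG F c x n) : ℝ≥0∞))
  exact ENNReal.div_le_div_right (by exact_mod_cast tau_step F c x n) _

lemma Rup_comp_le (F : X → X) (c : X → A) (x : X) : RupG F c (F x) ≤ RupG F c x := by
  refine le_trans (limsup_le_limsup (Eventually.of_forall fun n => ?_))
    (shift_limsup_le fun n => (tauG F (cylG F c x n) : ℝ≥0∞))
  exact ENNReal.div_le_div_right (by exact_mod_cast tau_step F c x n) _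

variable [MeasurableSpace X] [MeasurableSpace A] [Finite A] [MeasurableSingletonClass A]

lemma tau_cyl_measurable {F : X → X} {c : X → A} (hFm : Measurable F) (hc : Measurable c)
    (n : ℕ) : Measurable (fun x => (tauG F (cylG F c x n) : ℝ≥0∞)) := by
  have hEq : (fun x => (tauG F (cylG F c x n) : ℝ≥0∞)) =
      (fun w : Fin n → A => (tauG F {y | ∀ k : Fin n, c (F^[(k : ℕ)] y) = w k} : ℝ≥0∞)) ∘
        (fun x k => c (F^[(k : ℕ)] x)) := by
    funext x
    have : cylG F c x n = {y | ∀ k : Fin n, c (F^[(k : ℕ)] y) = c (F^[(k : ℕ)] x)} := by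
      ext y
      exact ⟨fun h k => h k k.isLt, fun h k hk => h ⟨k, hk⟩⟩
    simp only [Function.comp_apply, this]
  rw [hEq]
  exact (measurable_of_countable _).comp
    (measurable_pi_lambda _ fun k => hc.comp (hFm.iterate k))

lemma Rlow_measurable {F : X → X} {c : X → A} (hFm : Measurable F) (hc : Measurable c) :
    Measurable (RlowG F c) :=
  Measurable.liminf fun n => (tau_cyl_measurable hFm hc n).div measurable_const

lemma Rup_measurable {F : X → X} {c : X → A} (hFm : Measurable F) (hc : Measurable c) :
    Measurable (RupG F c) :=
  Measurable.limsup fun n => (tau_cyl_measurable hFm hc n).div measurable_const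

open MeasureTheory in
lemma ae_comp_eq_of_le {F : X → X} {μ : Measure X} [IsProbabilityMeasure μ]
    (hF : MeasurePreserving F μ μ) {g : X → ℝ≥0∞} (hg : Measurable g)
    (hle : ∀ x, g (F x) ≤ g x) : ∀ᵐ x ∂μ, g (F x) = g x := by
  have key : ∀ t : ℝ≥0∞, ∀ᵐ x ∂μ, (t < g x → t < g (F x)) := by
    intro t
    set s := {x | t < g x} with hs
    have hsm : MeasurableSet s := measurableSet_lt measurable_const hg
    have hsub : F ⁻¹' s ⊆ s := fun x hx => lt_of_lt_of_le hx (hle x)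
    have hmeq : μ (F ⁻¹' s) = μ s := hF.measure_preimage hsm.nullMeasurableSet
    have hdz : μ (s \ F ⁻¹' s) = 0 := by
      rw [measure_diff hsub (hF.measurable hsm).nullMeasurableSet (measure_ne_top μ _), hmeq,
        tsub_self]
    filter_upwards [measure_eq_zero_iff_ae_notMem.1 hdz] with x hx hxt
    by_contra hlt
    exact hx ⟨hxt, hlt⟩
  have hq := ae_all_iff.2 fun q : ℚ => key ((Real.toNNReal q : ℝ≥0∞))
  filter_upwards [hq] with x hx
  refine le_antisymm (hle x) (le_of_not_gt fun hlt => ?_)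
  obtain ⟨q, _, h1, h2⟩ := ENNReal.lt_iff_exists_rat_btwn.1 hlt
  exact absurd (hx q h2) (not_lt.2 h1.le)

end Aux



/-- If `μ` is an `F`-invariant Borel probability measure on `X` and the
coding `c` is measurable, then `R_low ∘ F = R_low` and `R_up ∘ F = R_up` `μ`-a.e.;
if moreover `(X, F, μ)` is ergodic, then there are constants `r₀, r₁ ∈ [0,∞]` with
`R_low(x) = r₀` and `R_up(x) = r₁` for `μ`-a.e. `x`. -/
theorem statement19 {X A : Type*} [MeasurableSpace X] [MeasurableSpace A] [Finite A]
    [MeasurableSingletonClass A]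
    (F : X → X) (c : X → A) (μ : Measure X) [IsProbabilityMeasure μ]
    (hF : MeasurePreserving F μ μ) (hc : Measurable c) :
    (∀ᵐ x ∂μ, RlowG F c (F x) = RlowG F c x ∧ RupG F c (F x) = RupG F c x) ∧
    (Ergodic F μ →
      ∃ r₀ r₁ : ℝ≥0∞, ∀ᵐ x ∂μ, RlowG F c x = r₀ ∧ RupG F c x = r₁) := by
  have hlow := ae_comp_eq_of_le hF (Rlow_measurable hF.measurable hc) (Rlow_comp_le F c)
  have hup := ae_comp_eq_of_le hF (Rup_measurable hF.measurable hc) (Rup_comp_le F c)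
  refine ⟨hlow.and hup, fun hE => ?_⟩
  obtain ⟨r₀, hr₀⟩ := hE.ae_eq_const_of_ae_eq_comp₀
    (Rlow_measurable hF.measurable hc).nullMeasurable hlow
  obtain ⟨r₁, hr₁⟩ := hE.ae_eq_const_of_ae_eq_comp₀
    (Rup_measurable hF.measurable hc).nullMeasurable hup
  exact ⟨r₀, r₁, hr₀.and hr₁⟩
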